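/- Let a, b, c be real numbers. For all natural numbers n ≠ m, the matrix-valued function x ↦ Qₙ(x)·W(x)·Qₘ(x)ᵀ is entrywise integrable on ℝ and ∫_ℝ Qₙ(x)·W(x)·Qₘ(x)ᵀ dx = 0; that is, {Qₙ} is a sequence of orthogonal polynomials for W. -/

import Mathlib

open Matrix Polynomial MeasureTheory

/-- The 3×3 Hermite-type weight matrix. -/
noncomputable def W (a b c : ℝ) (x : ℝ) : Matrix (Fin 3) (Fin 3) ℝ :=
  Real.exp (-x ^ 2) •
    !![Real.exp (2 * b * x) + a ^ 2 * x ^ 2, a * x, a * c * x ^ 2;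
       a * x, 1, c * x;
       a * c * x ^ 2, c * x, c ^ 2 * x ^ 2 + 1]

/-- The monic Hermite polynomials for the weight e^{-x²}:
h₀ = 1, h_{n+1}(x) = x·hₙ(x) - (1/2)·hₙ'(x). -/
noncomputable def h : ℕ → Polynomial ℝ
  | 0 => 1
  | n + 1 => X * h n - C (1 / 2 : ℝ) * derivative (h n)

/-- The sequence Qₙ of matrix orthogonal polynomials for W. -/
noncomputable def Qmat (a b c : ℝ) (n : ℕ) : Matrix (Fin 3) (Fin 3) (Polynomial ℝ) :=
  !![(h n).comp (X - C b),
     C a * (h (n + 1) - (h n).comp (X - C b) * X),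
     0;
     -(C (a * Real.exp (-b ^ 2) * n / 2)) * (h (n - 1)).comp (X - C b),
     C (a ^ 2 * Real.exp (-b ^ 2) * n / 2) * (h (n - 1)).comp (X - C b) * X
       + h n + C (c ^ 2 * n / 2) * h (n - 1) * X,
     -(C (c * n / 2)) * h (n - 1);
     0,
     C c * (h (n + 1) - h n * X),
     h n]

/-- Entrywise evaluation of a matrix polynomial. -/
noncomputable def evalM (P : Matrix (Fin 3) (Fin 3) (Polynomial ℝ)) (x : ℝ) :
    Matrix (Fin 3) (Fin 3) ℝ :=
  P.map (Polynomial.eval x)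

namespace QAux

open Real Filter Set Topology

/-! ### Polynomial × Gaussian analysis -/

lemma tendsto_pg_atTop {b : ℝ} (hb : 0 < b) (p : ℝ[X]) :
    Tendsto (fun x => eval x p * exp (-b * x ^ 2)) atTop (𝓝 0) := by
  have h1 : Tendsto (fun x => eval x p / exp x) atTop (𝓝 0) :=
    p.tendsto_div_exp_atTop
  have h2 : Tendsto (fun x : ℝ => x - b * x ^ 2) atTop atBot := by
    apply tendsto_atBot_mono' atTop
      (f₁ := fun x : ℝ => -x) ?_ tendsto_neg_atTop_atBot
    filter_upwards [eventually_ge_atTop (2 / b), eventually_ge_atTop (0:ℝ)] with x hx hx0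
    nlinarith [mul_le_mul_of_nonneg_right ((div_le_iff₀ hb).mp hx) hx0]
  have h3 : Tendsto (fun x : ℝ => exp (x - b * x ^ 2)) atTop (𝓝 0) :=
    Real.tendsto_exp_atBot.comp h2
  have h4 := h1.mul h3
  rw [mul_zero] at h4
  refine h4.congr (fun x => ?_)
  rw [div_mul_eq_mul_div, mul_div_assoc, ← exp_sub]
  ring_nf

lemma tendsto_pg_atBot {b : ℝ} (hb : 0 < b) (p : ℝ[X]) :
    Tendsto (fun x => eval x p * exp (-b * x ^ 2)) atBot (𝓝 0) := by
  have h1 := (tendsto_pg_atTop hb (p.comp (-X))).comp tendsto_neg_atBot_atTop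
  refine h1.congr (fun x => ?_)
  simp [Function.comp, eval_comp]

lemma exists_bound (p : ℝ[X]) : ∃ C : ℝ, ∀ x : ℝ, |eval x p| * exp (-(1/2) * x ^ 2) ≤ C := by
  have htop := (tendsto_pg_atTop (by norm_num : (0:ℝ) < 1/2) p).abs
  have hbot := (tendsto_pg_atBot (by norm_num : (0:ℝ) < 1/2) p).abs
  rw [abs_zero] at htop hbot
  obtain ⟨A, hA⟩ :=
    (htop.eventually (eventually_le_nhds (by norm_num : (0:ℝ) < 1))).exists_forall_of_atTop
  obtain ⟨B, hB⟩ :=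
    (hbot.eventually (eventually_le_nhds (by norm_num : (0:ℝ) < 1))).exists_forall_of_atBot
  have hc : ContinuousOn (fun x => |eval x p| * exp (-(1/2) * x ^ 2)) (Set.Icc B A) :=
    ((p.continuous_aeval.abs.mul (by continuity)).continuousOn)
  obtain ⟨C, hC⟩ := (isCompact_Icc (a := B) (b := A)).exists_bound_of_continuousOn hc
  refine ⟨max (max C 1) 1, fun x => ?_⟩
  have key : ∀ y : ℝ, |eval y p| * exp (-(1/2) * y ^ 2) = |eval y p * exp (-(1/2) * y ^ 2)| := by
    intro y; rw [abs_mul, abs_of_pos (exp_pos _)]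
  rcases le_total x B with hx | hx
  · rw [key]
    exact le_trans (hB x hx) (le_trans (le_max_right C 1) (le_max_left _ _))
  rcases le_total A x with hx2 | hx2
  · rw [key]
    exact le_trans (hA x hx2) (le_trans (le_max_right C 1) (le_max_left _ _))
  · refine le_trans (le_abs_self _) (le_trans ?_ (le_trans (le_max_left C 1) (le_max_left _ _)))
    exact hC x ⟨hx, hx2⟩

lemma integrable_pg (p : ℝ[X]) : Integrable (fun x => eval x p * exp (-x ^ 2)) := by
  obtain ⟨C, hC⟩ := exists_bound p
  refine Integrable.mono' (g := fun x => C * exp (-(1/2) * x ^ 2))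
    ((integrable_exp_neg_mul_sq (by norm_num : (0:ℝ) < 1/2)).const_mul C)
    ((p.continuous_aeval.mul (by continuity)).aestronglyMeasurable)
    (Filter.Eventually.of_forall fun x => ?_)
  have hxx : exp (-x ^ 2) = exp (-(1/2) * x ^ 2) * exp (-(1/2) * x ^ 2) := by
    rw [← exp_add]; ring_nf
  rw [Real.norm_eq_abs, abs_mul, abs_of_pos (exp_pos _), hxx, ← mul_assoc]
  exact mul_le_mul_of_nonneg_right (hC x) (exp_pos _).le

lemma integrable_pg_shift (p : ℝ[X]) (d : ℝ) :
    Integrable (fun x => eval x p * exp (-(x - d) ^ 2)) := by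
  have h1 := (integrable_pg (p.comp (X + C d))).comp_sub_right d
  refine h1.congr (Filter.Eventually.of_forall fun x => ?_)
  simp [eval_comp]

/-- The Gaussian integral functional on polynomials. -/
noncomputable def Gint (p : ℝ[X]) : ℝ := ∫ x : ℝ, eval x p * exp (-x ^ 2)

lemma Gint_add (p q : ℝ[X]) : Gint (p + q) = Gint p + Gint q := by
  unfold Gint
  rw [← integral_add (integrable_pg p) (integrable_pg q)]
  congr 1; funext x; simp [add_mul]

lemma Gint_Cmul (r : ℝ) (p : ℝ[X]) : Gint (C r * p) = r * Gint p := by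
  unfold Gint
  rw [← integral_const_mul]
  congr 1; funext x; simp [mul_assoc]

lemma Gint_sub (p q : ℝ[X]) : Gint (p - q) = Gint p - Gint q := by
  unfold Gint
  rw [← integral_sub (integrable_pg p) (integrable_pg q)]
  congr 1; funext x; simp [sub_mul]

lemma Gint_zero : Gint 0 = 0 := by simp [Gint]

lemma Gint_neg (p : ℝ[X]) : Gint (-p) = -Gint p := by
  have := Gint_sub 0 p
  simpa [Gint_zero] using this

lemma hasDerivAt_pg (p : ℝ[X]) (x : ℝ) :
    HasDerivAt (fun y => eval y p * exp (-y ^ 2))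
      (eval x (derivative p - C 2 * X * p) * exp (-x ^ 2)) x := by
  have h1 : HasDerivAt (fun y : ℝ => eval y p) (eval x (derivative p)) x := p.hasDerivAt x
  have h2 : HasDerivAt (fun y : ℝ => exp (-y ^ 2)) (exp (-x ^ 2) * (-(2 * x))) x := by
    have h3 : HasDerivAt (fun y : ℝ => -y ^ 2) (-(2 * x)) x := by
      simpa using (hasDerivAt_pow 2 x).fun_neg
    exact (Real.hasDerivAt_exp (-x ^ 2)).comp x h3
  have := h1.fun_mul h2
  refine this.congr_deriv ?_
  simp only [eval_sub, eval_mul, eval_C, eval_X]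
  ring

/-- Integration by parts for Gaussian integrals. -/
lemma Gint_deriv (p : ℝ[X]) : Gint (derivative p) = 2 * Gint (X * p) := by
  set f' : ℝ → ℝ := fun x => eval x (derivative p - C 2 * X * p) * exp (-x ^ 2) with hf'
  have hint : Integrable f' := integrable_pg _
  have htop : Tendsto (fun y => eval y p * exp (-y ^ 2)) atTop (𝓝 0) := by
    have := tendsto_pg_atTop (b := 1) one_pos p
    refine this.congr (fun x => by norm_num)
  have hbot : Tendsto (fun y => eval y p * exp (-y ^ 2)) atBot (𝓝 0) := by
    have := tendsto_pg_atBot (b := 1) one_pos p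
    refine this.congr (fun x => by norm_num)
  have hIoi : ∫ x in Ioi (0:ℝ), f' x = 0 - (eval 0 p * exp (-(0:ℝ) ^ 2)) :=
    integral_Ioi_of_hasDerivAt_of_tendsto
      (Continuous.continuousWithinAt (by exact (p.continuous_aeval.mul (by continuity))))
      (fun x _ => hasDerivAt_pg p x) hint.integrableOn htop
  have hIic : ∫ x in Iic (0:ℝ), f' x = (eval 0 p * exp (-(0:ℝ) ^ 2)) - 0 :=
    integral_Iic_of_hasDerivAt_of_tendsto
      (Continuous.continuousWithinAt (by exact (p.continuous_aeval.mul (by continuity))))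
      (fun x _ => hasDerivAt_pg p x) hint.integrableOn hbot
  have htot : ∫ x, f' x = 0 := by
    rw [← intervalIntegral.integral_Iic_add_Ioi (b := (0:ℝ)) hint.integrableOn hint.integrableOn,
      hIoi, hIic]
    ring
  have hz : Gint (derivative p - C 2 * X * p) = 0 := htot
  have h2 : Gint (C 2 * (X * p)) = 2 * Gint (X * p) := Gint_Cmul 2 (X * p)
  rw [Gint_sub, mul_assoc] at hz
  rw [h2] at hz
  linarith

/-! ### Hermite polynomial facts -/

lemma h_succ (n : ℕ) : h (n + 1) = X * h n - C (1 / 2 : ℝ) * derivative (h n) := rfl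

lemma degree_h_le (n : ℕ) : (h n).degree ≤ n := by
  induction n with
  | zero => simpa [h] using degree_one_le
  | succ n ih =>
      rw [h_succ]
      refine le_trans (degree_sub_le _ _) (max_le ?_ ?_)
      · refine le_trans (degree_mul_le _ _) ?_
        rw [degree_X]
        push_cast
        calc (1 : WithBot ℕ) + (h n).degree ≤ 1 + (n : WithBot ℕ) := by
              exact add_le_add_right ih 1
          _ = ((n+1 : ℕ) : WithBot ℕ) := by push_cast; rw [add_comm]
      · refine le_trans (degree_mul_le _ _) ?_
        refine le_trans (add_le_add degree_C_le ((degree_derivative_le (p := h n)).trans ih)) ?_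
        simp
        exact le_add_of_nonneg_right zero_le_one

lemma derivative_h (n : ℕ) : derivative (h (n + 1)) = C ((n : ℝ) + 1) * h n := by
  induction n with
  | zero => simp [h_succ, h]
  | succ n ih =>
      rw [h_succ (n+1)]
      simp only [derivative_sub, derivative_mul, derivative_X, derivative_C, ih]
      rw [h_succ n]
      push_cast
      simp only [C_add, C_1]
      ring

lemma Gint_mul_h_succ (p : ℝ[X]) (n : ℕ) :
    Gint (p * h (n + 1)) = (1/2) * Gint (derivative p * h n) := by
  have expand : p * h (n + 1) = X * (p * h n) - C (1/2 : ℝ) * (p * derivative (h n)) := by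
    rw [h_succ]; ring
  have ibp := Gint_deriv (p * h n)
  rw [derivative_mul, Gint_add] at ibp
  rw [expand, Gint_sub, Gint_Cmul]
  linarith

lemma Gint_mul_h_eq_zero (n : ℕ) (p : ℝ[X]) (hp : p.degree < n) : Gint (p * h n) = 0 := by
  induction n generalizing p with
  | zero =>
      have hp0 : p = 0 := by
        rw [← degree_eq_bot]
        exact Nat.WithBot.lt_zero_iff.mp (by exact_mod_cast hp)
      rw [hp0, zero_mul, Gint_zero]
  | succ n ih =>
      by_cases hp0 : p = 0
      · rw [hp0, zero_mul, Gint_zero]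
      rw [Gint_mul_h_succ]
      have hd : (derivative p).degree < n := by
        have h1 := p.degree_derivative_lt hp0
        have h2 : p.degree ≤ n := by
          rw [degree_eq_natDegree hp0] at hp ⊢
          exact_mod_cast Nat.lt_succ_iff.mp (by exact_mod_cast hp)
        exact lt_of_lt_of_le h1 h2
      rw [ih _ hd, mul_zero]

lemma Gint_h_mul_h_of_ne {i j : ℕ} (hij : i ≠ j) : Gint (h i * h j) = 0 := by
  rcases lt_or_gt_of_ne hij with hlt | hgt
  · exact Gint_mul_h_eq_zero j (h i) (lt_of_le_of_lt (degree_h_le i) (by exact_mod_cast hlt))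
  · rw [mul_comm]
    exact Gint_mul_h_eq_zero i (h j) (lt_of_le_of_lt (degree_h_le j) (by exact_mod_cast hgt))

lemma Gint_h_sq_succ (n : ℕ) :
    Gint (h (n + 1) * h (n + 1)) = ((n : ℝ) + 1) / 2 * Gint (h n * h n) := by
  rw [Gint_mul_h_succ, derivative_h, mul_assoc, Gint_Cmul]
  ring

/-- The key cancellation identity. -/
lemma Gint_key {n m : ℕ} (hnm : n ≠ m) :
    Gint (h (n + 1) * h m) = (m : ℝ) / 2 * Gint (h n * h (m - 1)) := by
  by_cases hm : m = n + 1
  · subst hm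
    rw [Gint_h_sq_succ]
    simp
  · rw [Gint_h_mul_h_of_ne (fun e => hm e.symm)]
    match m with
    | 0 => simp
    | k + 1 =>
        rw [Gint_h_mul_h_of_ne (show n ≠ k + 1 - 1 by omega)]
        ring

lemma Gint_key' {n m : ℕ} (hnm : n ≠ m) :
    Gint (h n * h (m + 1)) = (n : ℝ) / 2 * Gint (h (n - 1) * h m) := by
  rw [mul_comm, mul_comm (h (n-1))]
  exact Gint_key (Ne.symm hnm)

/-! ### Linearization helpers -/

lemma Gint_CC (r s : ℝ) (p q : ℝ[X]) : Gint ((C r * p) * (C s * q)) = r * s * Gint (p * q) := by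
  have e : (C r * p) * (C s * q) = C r * (C s * (p * q)) := by ring
  rw [e, Gint_Cmul, Gint_Cmul]; ring

lemma Gint_CL (r : ℝ) (p q : ℝ[X]) : Gint ((C r * p) * q) = r * Gint (p * q) := by
  rw [mul_assoc, Gint_Cmul]

lemma Gint_CR (s : ℝ) (p q : ℝ[X]) : Gint (p * (C s * q)) = s * Gint (p * q) := by
  have e : p * (C s * q) = C s * (p * q) := by ring
  rw [e, Gint_Cmul]

/-- Translated Gaussian integral as a `Gint`. -/
lemma Gint_shift (q : ℝ[X]) (d : ℝ) :
    (∫ x : ℝ, eval x q * exp (-(x - d) ^ 2)) = Gint (q.comp (X + C d)) := by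
  have h1 := integral_add_right_eq_self (μ := volume)
    (fun x => eval x q * Real.exp (-(x - d) ^ 2)) d
  rw [← h1]
  unfold Gint
  congr 1; funext x
  simp [eval_comp]

/-! ### The vector decomposition of Qₙ W Qₘᵀ -/

noncomputable def Fp (a b : ℝ) (n : ℕ) : Fin 3 → ℝ[X] :=
  ![(h n).comp (X - C b), -(C (a * Real.exp (-b^2) * n / 2)) * (h (n-1)).comp (X - C b), 0]
noncomputable def Gp (a c : ℝ) (n : ℕ) : Fin 3 → ℝ[X] :=
  ![C a * h (n+1), h n, C c * h (n+1)]
noncomputable def Zp (c : ℝ) (n : ℕ) : Fin 3 → ℝ[X] :=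
  ![0, -(C (c * (n:ℝ) / 2)) * h (n-1), h n]

noncomputable def Fq (a b : ℝ) (n : ℕ) : Fin 3 → ℝ[X] :=
  ![h n, -(C (a * Real.exp (-b^2) * n / 2)) * h (n-1), 0]

lemma Fp_comp (a b : ℝ) (n : ℕ) (i : Fin 3) : (Fp a b n i).comp (X + C b) = Fq a b n i := by
  fin_cases i <;>
    simp [Fp, Fq, mul_comp, neg_comp, C_comp, sub_comp, X_comp, comp_assoc, zero_comp, add_comp]

lemma entry_eq (a b c : ℝ) (n m : ℕ) (x : ℝ) (i j : Fin 3) :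
    (evalM (Qmat a b c n) x * W a b c x * (evalM (Qmat a b c m) x)ᵀ) i j
    = Real.exp (b^2) * (eval x (Fp a b n i * Fp a b m j) * Real.exp (-(x - b)^2))
      + eval x (Gp a c n i * Gp a c m j + Zp c n i * Zp c m j) * Real.exp (-x^2) := by
  have hexp : Real.exp (2*b*x) * Real.exp (-x^2)
      = Real.exp (b^2) * Real.exp (-(x-b)^2) := by
    rw [← Real.exp_add, ← Real.exp_add]; ring_nf
  have base : (evalM (Qmat a b c n) x * W a b c x * (evalM (Qmat a b c m) x)ᵀ) i j
      = Real.exp (2*b*x) * Real.exp (-x^2) * (eval x (Fp a b n i) * eval x (Fp a b m j))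
        + Real.exp (-x^2) * (eval x (Gp a c n i) * eval x (Gp a c m j)
            + eval x (Zp c n i) * eval x (Zp c m j)) := by
    fin_cases i <;> fin_cases j <;>
      simp [evalM, Qmat, W, Fp, Gp, Zp, Matrix.mul_apply, Fin.sum_univ_succ, eval_mul, eval_add,
        eval_sub, eval_neg, eval_C, eval_X, Matrix.smul_apply, smul_eq_mul] <;>
      ring
  rw [base, hexp]
  simp only [eval_mul, eval_add]
  ring

lemma entry_value (a b c : ℝ) {n m : ℕ} (hnm : n ≠ m) (i j : Fin 3) :
    Real.exp (b^2) * Gint ((Fp a b n i * Fp a b m j).comp (X + C b))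
      + Gint (Gp a c n i * Gp a c m j + Zp c n i * Zp c m j) = 0 := by
  have hE : Real.exp (b^2) * Real.exp (-b^2) = 1 := by rw [← Real.exp_add]; simp
  have hJp : (n:ℝ) * (m:ℝ) * Gint (h (n-1) * h (m-1)) = 0 := by
    match n, m with
    | 0, m => simp
    | n+1, 0 => simp
    | n+1, m+1 =>
        rw [Gint_h_mul_h_of_ne (show n+1-1 ≠ m+1-1 by omega)]
        ring
  rw [mul_comp, Fp_comp, Fp_comp]
  fin_cases i <;> fin_cases j <;>
    simp [Fq, Gp, Zp, neg_mul, mul_neg, neg_neg, Gint_add, Gint_neg, Gint_zero,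
      Gint_CC, Gint_CL, Gint_CR]
  · rw [Gint_h_mul_h_of_ne hnm, Gint_h_mul_h_of_ne (show n+1 ≠ m+1 by omega)]; ring
  · rw [Gint_key hnm]
    linear_combination (-(a * (m:ℝ) / 2 * Gint (h n * h (m-1)))) * hE
  · exact Or.inr (Or.inr (Gint_h_mul_h_of_ne (by omega)))
  · rw [Gint_key' hnm]
    linear_combination (-(a * (n:ℝ) / 2 * Gint (h (n-1) * h m))) * hE
  · rw [Gint_h_mul_h_of_ne hnm]
    linear_combination (Real.exp (b^2) * Real.exp (-b^2) * Real.exp (-b^2) * a * a / 4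
      + c * c / 4) * hJp
  · rw [Gint_key' hnm]; ring
  · exact Or.inr (Or.inr (Gint_h_mul_h_of_ne (by omega)))
  · rw [Gint_key hnm]; ring
  · rw [Gint_h_mul_h_of_ne hnm, Gint_h_mul_h_of_ne (show n+1 ≠ m+1 by omega)]; ring

end QAux

open QAux in
/-- {Qₙ} is a sequence of orthogonal polynomials for W: for n ≠ m the
function x ↦ Qₙ(x)·W(x)·Qₘ(x)ᵀ is entrywise integrable on ℝ with integral zero. -/
theorem Q_orthogonal (a b c : ℝ) (n m : ℕ) (hnm : n ≠ m) :
    (∀ i j, Integrable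
        (fun x => (evalM (Qmat a b c n) x * W a b c x * (evalM (Qmat a b c m) x)ᵀ) i j)) ∧
    (∀ i j, (∫ x, (evalM (Qmat a b c n) x * W a b c x * (evalM (Qmat a b c m) x)ᵀ) i j)
        = 0) := by
  have hint1 : ∀ i j : Fin 3, Integrable
      (fun x => Real.exp (b^2) * (eval x (Fp a b n i * Fp a b m j) * Real.exp (-(x - b)^2))) :=
    fun i j => (integrable_pg_shift (Fp a b n i * Fp a b m j) b).const_mul _
  have hint2 : ∀ i j : Fin 3, Integrable
      (fun x => eval x (Gp a c n i * Gp a c m j + Zp c n i * Zp c m j) * Real.exp (-x^2)) :=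
    fun i j => integrable_pg _
  constructor
  · intro i j
    exact ((hint1 i j).add (hint2 i j)).congr
      (Filter.Eventually.of_forall fun x => (entry_eq a b c n m x i j).symm)
  · intro i j
    rw [show (fun x => (evalM (Qmat a b c n) x * W a b c x * (evalM (Qmat a b c m) x)ᵀ) i j)
        = (fun x => Real.exp (b^2) * (eval x (Fp a b n i * Fp a b m j) * Real.exp (-(x - b)^2))
          + eval x (Gp a c n i * Gp a c m j + Zp c n i * Zp c m j) * Real.exp (-x^2))
        from funext fun x => entry_eq a b c n m x i j]
    rw [integral_add (hint1 i j) (hint2 i j), integral_const_mul, Gint_shift]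
    exact entry_value a b c hnm i j
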